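/- In the causal model M whose endogenous variables are 2n+1 binary pixel variables X₁, X₂, …, X_{2n+1} set directly by the exogenous context (every pixel-value assignment being realized by some context) together with an output variable O whose equation gives O = 0 iff either X₁ = 0 and the number of zeros among X₂,…,X_{2n+1} is even (possibly 0), or X₁ = 1 and the number of zeros among X₂,…,X_{2n+1} is even and positive: for every context u⃗ in which X₁ = 0, O = 0, and the number of zeros among X₂,…,X_{2n+1} is positive, there is no (possibly empty) conjunction Y⃗=y⃗ of assignments to pixel variables other than X₁ such that X₁=0 ∧ Y⃗=y⃗ is an actual cause of O=0 in (M,u⃗). In particular, X₁=0 by itself is not an actual cause of O=0 in any such context, and for any single pixel Y among X₂,…,X_{2n+1} with actual value y in u⃗, Y=y is an actual (but-for) cause of O=0 in (M,u⃗). -/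

import Mathlib

open Classical

/-- A recursive causal model: `C` is the type of contexts (settings of the exogenous
variables), `V` the type of endogenous variables, `Val` the type of values.
`F X c g` is the structural equation for `X`, given the context `c` and the values `g`
of the other endogenous variables.  Recursiveness (acyclicity) is captured by the
requirement that under every intervention (a partial assignment `I` of values to
endogenous variables, whose equations are replaced by the given constants) and every
context there is a unique solution of the equations. -/
structure CausalModel (C V Val : Type) where
  F : V → C → (V → Val) → Val
  unique_sol : ∀ (I : V → Option Val) (c : C),
    ∃! g : V → Val, ∀ X : V, g X = (I X).getD (F X c g)

namespace CausalModel

variable {C V Val : Type}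

/-- The unique solution of the model under intervention `I` in context `c`. -/
noncomputable def sol (M : CausalModel C V Val) (I : V → Option Val) (c : C) : V → Val :=
  (M.unique_sol I c).choose

/-- The actual values of the endogenous variables in context `c` (no intervention). -/
noncomputable def actVal (M : CausalModel C V Val) (c : C) : V → Val :=
  M.sol (fun _ => none) c

/-- The intervention `A ← x` setting the variables in `A` to the values given by `x`. -/
def interv [DecidableEq V] (A : Finset V) (x : V → Val) : V → Option Val :=
  fun X => if X ∈ A then some (x X) else none

/-- AC2 for the set `A` with the fixed alternative setting `x'`: there are a set `W` of
endogenous variables disjoint from `A` and values `w` that the variables in `W` take in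
the actual setting such that `(M,c) ⊨ [A ← x', W ← w] ¬φ`. -/
def AC2At [DecidableEq V] (M : CausalModel C V Val) (c : C)
    (A : Finset V) (x' : V → Val) (φ : (V → Val) → Prop) : Prop :=
  ∃ (W : Finset V) (w : V → Val),
    Disjoint A W ∧ (∀ Z ∈ W, M.actVal c Z = w Z) ∧
    ¬ φ (M.sol (interv (A ∪ W) (fun Z => if Z ∈ A then x' Z else w Z)) c)

/-- `A = x` is an actual cause of `φ` in `(M,c)`: AC1, AC2 and AC3 (minimality of `A`
with respect to the witnessing setting `x'`). -/
def IsActualCause [DecidableEq V] (M : CausalModel C V Val) (c : C)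
    (A : Finset V) (x : V → Val) (φ : (V → Val) → Prop) : Prop :=
  (∀ X ∈ A, M.actVal c X = x X) ∧ φ (M.actVal c) ∧
  ∃ x' : V → Val, AC2At M c A x' φ ∧ ∀ B : Finset V, B ⊂ A → ¬ AC2At M c B x' φ

/-- A but-for cause: an actual cause for which AC2 is witnessed with `W = ∅`. -/
def IsButForCause [DecidableEq V] (M : CausalModel C V Val) (c : C)
    (A : Finset V) (x : V → Val) (φ : (V → Val) → Prop) : Prop :=
  (∀ X ∈ A, M.actVal c X = x X) ∧ φ (M.actVal c) ∧
  ∃ x' : V → Val, ¬ φ (M.sol (interv A x') c) ∧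
    ∀ B : Finset V, B ⊂ A → ¬ AC2At M c B x' φ

/-- SC1: `(M,c) ⊨ (A = x) ∧ φ`.  (This is also the satisfaction of `A = x ∧ φ`.) -/
def SC1 (M : CausalModel C V Val) (c : C) (A : Finset V) (x : V → Val)
    (φ : (V → Val) → Prop) : Prop :=
  (∀ X ∈ A, M.actVal c X = x X) ∧ φ (M.actVal c)

/-- SC2: some conjunct `X = x X` of `A = x` is part of an actual cause of `φ` in `(M,c)`:
there is a (possibly empty) conjunction `Y = y` such that `X = x X ∧ Y = y` is an actual
cause of `φ` in `(M,c)`. -/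
def SC2 [DecidableEq V] (M : CausalModel C V Val) (c : C) (A : Finset V)
    (x : V → Val) (φ : (V → Val) → Prop) : Prop :=
  ∃ X ∈ A, ∃ (Y : Finset V) (y : V → Val), X ∉ Y ∧
    IsActualCause M c (insert X Y) (Function.update y X (x X)) φ

/-- SC3: `(M,c') ⊨ [A ← x] φ` for all contexts `c'`. -/
def SC3 [DecidableEq V] (M : CausalModel C V Val) (A : Finset V) (x : V → Val)
    (φ : (V → Val) → Prop) : Prop :=
  ∀ c' : C, φ (M.sol (interv A x) c')

/-- SC4: minimality; no strict subset of `A` (with `x` restricted) satisfies SC1, SC2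
and SC3. -/
def SC4 [DecidableEq V] (M : CausalModel C V Val) (c : C) (A : Finset V)
    (x : V → Val) (φ : (V → Val) → Prop) : Prop :=
  ∀ B : Finset V, B ⊂ A → ¬ (SC1 M c B x φ ∧ SC2 M c B x φ ∧ SC3 M B x φ)

/-- `A = x` is a sufficient cause of `φ` in `(M,c)`. -/
def IsSufficientCause [DecidableEq V] (M : CausalModel C V Val) (c : C)
    (A : Finset V) (x : V → Val) (φ : (V → Val) → Prop) : Prop :=
  SC1 M c A x φ ∧ SC2 M c A x φ ∧ SC3 M A x φ ∧ SC4 M c A x φ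

/-- EX1 relative to a set `K` of contexts: in every context of `K` satisfying
`(A = x) ∧ φ` some conjunct of `A = x` is part of an actual cause of `φ` (SC2), and
`(M,c') ⊨ [A ← x] φ` for all `c' ∈ K`. -/
def EX1 [DecidableEq V] (M : CausalModel C V Val) (K : Set C) (A : Finset V)
    (x : V → Val) (φ : (V → Val) → Prop) : Prop :=
  (∀ c ∈ K, SC1 M c A x φ → SC2 M c A x φ) ∧
  (∀ c ∈ K, φ (M.sol (interv A x) c))

/-- `A = x` is an explanation of `φ` relative to the set `K` of contexts: EX1,
EX2 (minimality) and EX3 (`(M,c) ⊨ (A = x) ∧ φ` for some `c ∈ K`). -/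
def IsExplanation [DecidableEq V] (M : CausalModel C V Val) (K : Set C)
    (A : Finset V) (x : V → Val) (φ : (V → Val) → Prop) : Prop :=
  EX1 M K A x φ ∧
  (∀ B : Finset V, B ⊂ A → ¬ EX1 M K B x φ) ∧
  (∃ c ∈ K, SC1 M c A x φ)

end CausalModel

open CausalModel

/-- The number of zeros among the pixels `X₂, …, X_{2n+1}` (the coordinates `i ≠ 0`) of
a pixel assignment `v : Fin (2n+1) → Bool` (with `false` playing the role of `0`). -/
def restZeroCount {m : ℕ} (v : Fin (m + 1) → Bool) : ℕ :=
  (Finset.univ.filter fun i : Fin (m + 1) => i ≠ 0 ∧ v i = false).card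


namespace CausalModel

variable {C V Val : Type}

theorem sol_spec' (M : CausalModel C V Val) (I : V → Option Val) (c : C) (X : V) :
    M.sol I c X = (I X).getD (M.F X c (M.sol I c)) :=
  (M.unique_sol I c).choose_spec.1 X

theorem sol_eq' (M : CausalModel C V Val) (I : V → Option Val) (c : C)
    {g : V → Val} (hg : ∀ X, g X = (I X).getD (M.F X c g)) : M.sol I c = g :=
  ((M.unique_sol I c).choose_spec.2 g hg).symm

theorem sol_actual' (M : CausalModel C V Val) (I : V → Option Val) (c : C)
    (h : ∀ X v, I X = some v → M.actVal c X = v) : M.sol I c = M.actVal c := by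
  apply M.sol_eq'
  intro X
  cases hIX : I X with
  | none => simpa [actVal] using M.sol_spec' (fun _ => none) c X
  | some v => simpa using h X v hIX

end CausalModel

theorem restZeroCount_congr' {m : ℕ} {v v' : Fin (m + 1) → Bool}
    (h : ∀ i, i ≠ 0 → v' i = v i) : restZeroCount v' = restZeroCount v := by
  unfold restZeroCount
  congr 1
  apply Finset.filter_congr
  intro i _
  by_cases hi : i = 0
  · simp [hi]
  · simp [hi, h i hi]

theorem restZeroCount_flip {m : ℕ} {v v' : Fin (m + 1) → Bool} {j : Fin (m + 1)}
    (hj : j ≠ 0) (h : ∀ i, i ≠ j → v' i = v i) (hjv : v' j = !(v j)) :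
    (Even (restZeroCount v') ↔ ¬ Even (restZeroCount v)) := by
  classical
  unfold restZeroCount
  cases hvj : v j with
  | false =>
      have hjT : j ∈ Finset.univ.filter (fun i : Fin (m + 1) => i ≠ 0 ∧ v i = false) := by
        simp [hj, hvj]
      have hTT : (Finset.univ.filter fun i : Fin (m + 1) => i ≠ 0 ∧ v' i = false)
          = (Finset.univ.filter fun i : Fin (m + 1) => i ≠ 0 ∧ v i = false).erase j := by
        ext i
        by_cases hij : i = j
        · subst hij
          simp [hjv, hvj]
        · simp [Finset.mem_erase, hij, h i hij]
      rw [hTT, Finset.card_erase_of_mem hjT]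
      have hpos : 0 < (Finset.univ.filter fun i : Fin (m + 1) => i ≠ 0 ∧ v i = false).card :=
        Finset.card_pos.mpr ⟨j, hjT⟩
      simp only [Nat.even_iff]
      omega
  | true =>
      have hjT : j ∉ Finset.univ.filter (fun i : Fin (m + 1) => i ≠ 0 ∧ v i = false) := by
        simp [hvj]
      have hTT : (Finset.univ.filter fun i : Fin (m + 1) => i ≠ 0 ∧ v' i = false)
          = insert j (Finset.univ.filter fun i : Fin (m + 1) => i ≠ 0 ∧ v i = false) := by
        ext i
        by_cases hij : i = j
        · subst hij
          simp [hjv, hvj, hj]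
        · simp [hij, h i hij]
      rw [hTT, Finset.card_insert_of_notMem hjT]
      simp only [Nat.even_iff]
      omega

/-- The condition under which the output is `0` (`false`). -/
def Cnd {m : ℕ} (p : Fin (m + 1) → Bool) : Prop :=
  (p 0 = false ∧ Even (restZeroCount p)) ∨
  (p 0 = true ∧ Even (restZeroCount p) ∧ 0 < restZeroCount p)

theorem pixkey {n : ℕ}
    (M : CausalModel (Fin (2 * n + 1) → Bool) (Sum (Fin (2 * n + 1)) Unit) Bool)
    (hpix : ∀ (i : Fin (2 * n + 1)) (c : Fin (2 * n + 1) → Bool)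
        (g : Sum (Fin (2 * n + 1)) Unit → Bool), M.F (Sum.inl i) c g = c i)
    (hout : ∀ (c : Fin (2 * n + 1) → Bool) (g : Sum (Fin (2 * n + 1)) Unit → Bool),
      M.F (Sum.inr ()) c g =
        (if (g (Sum.inl 0) = false ∧ Even (restZeroCount fun i => g (Sum.inl i))) ∨
            (g (Sum.inl 0) = true ∧ Even (restZeroCount fun i => g (Sum.inl i)) ∧
              0 < restZeroCount fun i => g (Sum.inl i))
         then false else true))
    (S : Finset (Sum (Fin (2 * n + 1)) Unit)) (v : Sum (Fin (2 * n + 1)) Unit → Bool)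
    (c : Fin (2 * n + 1) → Bool) (hS : Sum.inr () ∉ S) :
    (∀ i, M.sol (interv S v) c (Sum.inl i)
        = (if Sum.inl i ∈ S then v (Sum.inl i) else c i)) ∧
    (M.sol (interv S v) c (Sum.inr ()) = false ↔
      Cnd (fun i => if Sum.inl i ∈ S then v (Sum.inl i) else c i)) := by
  classical
  set p : Fin (2 * n + 1) → Bool :=
    fun i => if Sum.inl i ∈ S then v (Sum.inl i) else c i with hp
  have hsol : M.sol (interv S v) c
      = Sum.elim p (fun _ => if Cnd p then false else true) := by
    apply M.sol_eq'
    intro X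
    match X with
    | Sum.inl i =>
        rw [hpix]
        by_cases hm : Sum.inl i ∈ S
        · simp [interv, hm, hp]
        · simp [interv, hm, hp]
    | Sum.inr () =>
        rw [hout]
        have h1 : interv S v (Sum.inr ()) = none := by simp [interv, hS]
        rw [h1]
        show (if Cnd p then false else true) = _
        simp only [Sum.elim_inl]
        exact if_congr Iff.rfl rfl rfl
  constructor
  · intro i
    rw [hsol]
    rfl
  · rw [hsol]
    show (if Cnd p then false else true) = false ↔ Cnd p
    by_cases h : Cnd p <;> simp [h]

/-- The causal model with `2n+1` binary pixel variables `X₁, …, X_{2n+1}` (indexed by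
`Sum.inl i` for `i : Fin (2n+1)`, with `X₁ = Sum.inl 0`) set directly by the exogenous
context (contexts are exactly the pixel assignments, so every pixel-value assignment is
realized), and an output variable `O = Sum.inr ()` whose equation gives `O = 0` iff
either `X₁ = 0` and the number of zeros among `X₂, …, X_{2n+1}` is even (possibly `0`),
or `X₁ = 1` and that number is even and positive (`false` playing the role of `0`).
For every context `c` in which `X₁ = 0`, `O = 0`, and the number of zeros among
`X₂, …, X_{2n+1}` is positive: there is no (possibly empty) conjunction `Y = y` of
assignments to pixel variables other than `X₁` such that `X₁ = 0 ∧ Y = y` is an actual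
cause of `O = 0` in `(M,c)`; in particular, `X₁ = 0` by itself is not an actual cause of
`O = 0` in `(M,c)`; and for any single pixel `Y` among `X₂, …, X_{2n+1}` with actual
value `y` in `c`, `Y = y` is an actual (but-for) cause of `O = 0` in `(M,c)`. -/
theorem rare_event_first_pixel_not_cause (n : ℕ)
    (M : CausalModel (Fin (2 * n + 1) → Bool) (Sum (Fin (2 * n + 1)) Unit) Bool)
    (hpix : ∀ (i : Fin (2 * n + 1)) (c : Fin (2 * n + 1) → Bool)
        (g : Sum (Fin (2 * n + 1)) Unit → Bool), M.F (Sum.inl i) c g = c i)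
    (hout : ∀ (c : Fin (2 * n + 1) → Bool) (g : Sum (Fin (2 * n + 1)) Unit → Bool),
      M.F (Sum.inr ()) c g =
        (if (g (Sum.inl 0) = false ∧ Even (restZeroCount fun i => g (Sum.inl i))) ∨
            (g (Sum.inl 0) = true ∧ Even (restZeroCount fun i => g (Sum.inl i)) ∧
              0 < restZeroCount fun i => g (Sum.inl i))
         then false else true))
    (c : Fin (2 * n + 1) → Bool)
    (hX₁ : M.actVal c (Sum.inl 0) = false)
    (hO : M.actVal c (Sum.inr ()) = false)
    (hz : 0 < restZeroCount fun i => M.actVal c (Sum.inl i)) :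
    (¬ ∃ (Y : Finset (Sum (Fin (2 * n + 1)) Unit))
        (y : Sum (Fin (2 * n + 1)) Unit → Bool),
        (∀ X ∈ Y, ∃ i : Fin (2 * n + 1), i ≠ 0 ∧ X = Sum.inl i) ∧
        Sum.inl 0 ∉ Y ∧
        IsActualCause M c (insert (Sum.inl 0) Y)
          (Function.update y (Sum.inl 0) false)
          (fun g => g (Sum.inr ()) = false)) ∧
    ¬ IsActualCause M c {Sum.inl 0} (fun _ => false)
        (fun g => g (Sum.inr ()) = false) ∧
    (∀ i : Fin (2 * n + 1), i ≠ 0 →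
      IsButForCause M c {Sum.inl i} (M.actVal c)
        (fun g => g (Sum.inr ()) = false)) := by
  classical
  -- basic facts about the actual setting
  have hemp : interv (∅ : Finset (Sum (Fin (2 * n + 1)) Unit))
      (fun _ => false) = (fun _ => (none : Option Bool)) := by
    funext X; simp [interv]
  have hact1 : ∀ i, M.actVal c (Sum.inl i) = c i := by
    intro i
    have h := (pixkey M hpix hout ∅ (fun _ => false) c (by simp)).1 i
    rw [hemp] at h
    simpa [actVal] using h
  have hact2 : (M.actVal c (Sum.inr ()) = false ↔ Cnd c) := by
    have h := (pixkey M hpix hout ∅ (fun _ => false) c (by simp)).2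
    rw [hemp] at h
    have hcc : (fun i : Fin (2 * n + 1) =>
        if Sum.inl i ∈ (∅ : Finset (Sum (Fin (2 * n + 1)) Unit)) then false else c i) = c := by
      funext i; simp
    rw [hcc] at h
    simpa [actVal] using h
  have hc0 : c 0 = false := by rw [← hact1 0]; exact hX₁
  have hcz : 0 < restZeroCount c := by
    have hfc : (fun i => M.actVal c (Sum.inl i)) = c := funext hact1
    rwa [hfc] at hz
  have hEv : Even (restZeroCount c) := by
    rcases hact2.mp hO with ⟨_, h⟩ | ⟨h0, _, _⟩
    · exact h
    · rw [hc0] at h0; exact absurd h0 (by simp)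
  -- Part 1
  have part1 : ¬ ∃ (Y : Finset (Sum (Fin (2 * n + 1)) Unit))
      (y : Sum (Fin (2 * n + 1)) Unit → Bool),
      (∀ X ∈ Y, ∃ i : Fin (2 * n + 1), i ≠ 0 ∧ X = Sum.inl i) ∧
      Sum.inl 0 ∉ Y ∧
      IsActualCause M c (insert (Sum.inl 0) Y)
        (Function.update y (Sum.inl 0) false)
        (fun g => g (Sum.inr ()) = false) := by
    rintro ⟨Y, y, hY, h0Y, hcause⟩
    obtain ⟨hAx, hφ, x', hAC2, hmin⟩ := hcause
    obtain ⟨W, w, hdisj, hWact, hneg⟩ := hAC2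
    set A : Finset (Sum (Fin (2 * n + 1)) Unit) := insert (Sum.inl 0) Y with hA
    have h0A : (Sum.inl 0 : Sum (Fin (2 * n + 1)) Unit) ∈ A := Finset.mem_insert_self _ _
    have hinrA : (Sum.inr () : Sum (Fin (2 * n + 1)) Unit) ∉ A := by
      intro h
      rcases Finset.mem_insert.mp h with h | h
      · exact absurd h (by simp)
      · obtain ⟨i, _, hi⟩ := hY _ h; exact absurd hi (by simp)
    have hinrW : (Sum.inr () : Sum (Fin (2 * n + 1)) Unit) ∉ W := by
      intro h
      apply hneg
      have hs := M.sol_spec'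
        (interv (A ∪ W) (fun Z => if Z ∈ A then x' Z else w Z)) c (Sum.inr ())
      have hmem : (Sum.inr () : Sum (Fin (2 * n + 1)) Unit) ∈ A ∪ W :=
        Finset.mem_union_right _ h
      rw [show interv (A ∪ W) (fun Z => if Z ∈ A then x' Z else w Z) (Sum.inr ())
          = some (w (Sum.inr ())) from by simp [interv, hmem, hinrA]] at hs
      show _ = false
      rw [hs]
      simp only [Option.getD_some]
      rw [← hWact _ h]
      exact hO
    have hinrAW : (Sum.inr () : Sum (Fin (2 * n + 1)) Unit) ∉ A ∪ W := by
      simp [hinrA, hinrW]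
    obtain ⟨hpixv, hiffv⟩ :=
      pixkey M hpix hout (A ∪ W) (fun Z => if Z ∈ A then x' Z else w Z) c hinrAW
    set p : Fin (2 * n + 1) → Bool := fun i =>
      if Sum.inl i ∈ A ∪ W then (if Sum.inl i ∈ A then x' (Sum.inl i) else w (Sum.inl i))
      else c i with hp
    have hnC : ¬ Cnd p := fun h => hneg (hiffv.mpr h)
    have h0AW : (Sum.inl 0 : Sum (Fin (2 * n + 1)) Unit) ∈ A ∪ W :=
      Finset.mem_union_left _ h0A
    have hp0 : p 0 = x' (Sum.inl 0) := by simp [hp, h0AW, h0A]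
    have hYA : Y ⊆ A := Finset.subset_insert _ _
    by_cases hcase : x' (Sum.inl 0) = true ∧ Even (restZeroCount p)
    · -- the "all other pixels would be 1" case: shrink A at a rest pixel j
      obtain ⟨hx0, hEvp⟩ := hcase
      have hp0t : p 0 = true := by rw [hp0, hx0]
      have hcnt0 : restZeroCount p = 0 := by
        by_contra h
        exact hnC (Or.inr ⟨hp0t, hEvp, Nat.pos_of_ne_zero h⟩)
      obtain ⟨j, hj0, hcj⟩ : ∃ j : Fin (2 * n + 1), j ≠ 0 ∧ c j = false := by
        obtain ⟨j, hj⟩ := Finset.card_pos.mp hcz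
        rw [Finset.mem_filter] at hj
        exact ⟨j, hj.2.1, hj.2.2⟩
      have hpj : p j = true := by
        by_contra h
        have hf : p j = false := by revert h; cases p j <;> simp
        have hmemj : j ∈ Finset.univ.filter
            (fun i : Fin (2 * n + 1) => i ≠ 0 ∧ p i = false) := by simp [hj0, hf]
        have hpos : 0 < restZeroCount p := Finset.card_pos.mpr ⟨j, hmemj⟩
        omega
      have hjA : Sum.inl j ∈ A := by
        by_cases hm : Sum.inl j ∈ A ∪ W
        · rcases Finset.mem_union.mp hm with h | h
          · exact h
          · have hnA : Sum.inl j ∉ A := Finset.disjoint_right.mp hdisj h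
            have hw : p j = w (Sum.inl j) := by
              show (if Sum.inl j ∈ A ∪ W then
                  (if Sum.inl j ∈ A then x' (Sum.inl j) else w (Sum.inl j))
                else c j) = w (Sum.inl j)
              rw [if_pos hm, if_neg hnA]
            have h2 := hWact _ h
            rw [hact1 j, hcj] at h2
            rw [hpj] at hw
            rw [← hw] at h2
            exact absurd h2 (by simp)
        · have hw : p j = c j := by
            show (if Sum.inl j ∈ A ∪ W then
                (if Sum.inl j ∈ A then x' (Sum.inl j) else w (Sum.inl j))
              else c j) = c j
            rw [if_neg hm]
          rw [hpj, hcj] at hw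
          exact absurd hw (by simp)
      apply hmin (A.erase (Sum.inl j)) (Finset.erase_ssubset hjA)
      refine ⟨insert (Sum.inl j) W, Function.update w (Sum.inl j) false, ?_, ?_, ?_⟩
      · rw [Finset.disjoint_insert_right]
        exact ⟨Finset.notMem_erase _ _,
          Finset.disjoint_of_subset_left (Finset.erase_subset _ _) hdisj⟩
      · intro Z hZ
        rcases Finset.mem_insert.mp hZ with rfl | hZ
        · rw [Function.update_self, hact1 j]; exact hcj
        · by_cases hZj : Z = Sum.inl j
          · subst hZj
            rw [Function.update_self, hact1 j]; exact hcj
          · rw [Function.update_of_ne hZj]; exact hWact Z hZ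
      · have hsets2 : A.erase (Sum.inl j) ∪ insert (Sum.inl j) W = A ∪ W := by
          rw [Finset.union_insert, ← Finset.insert_union, Finset.insert_erase hjA]
        have hinr2 : (Sum.inr () : Sum (Fin (2 * n + 1)) Unit)
            ∉ A.erase (Sum.inl j) ∪ insert (Sum.inl j) W := by
          rw [hsets2]; exact hinrAW
        obtain ⟨hpix3, hiff3⟩ := pixkey M hpix hout
          (A.erase (Sum.inl j) ∪ insert (Sum.inl j) W)
          (fun Z => if Z ∈ A.erase (Sum.inl j) then x' Z
            else Function.update w (Sum.inl j) false Z) c hinr2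
        intro hφ'
        have hC'' := hiff3.mp hφ'
        set p'' : Fin (2 * n + 1) → Bool := fun i =>
          if Sum.inl i ∈ A.erase (Sum.inl j) ∪ insert (Sum.inl j) W then
            (if Sum.inl i ∈ A.erase (Sum.inl j) then x' (Sum.inl i)
              else Function.update w (Sum.inl j) false (Sum.inl i))
          else c i with hp''
        have hjB : (Sum.inl j : Sum (Fin (2 * n + 1)) Unit) ∉ A.erase (Sum.inl j) :=
          Finset.notMem_erase _ _
        have hjBW : (Sum.inl j : Sum (Fin (2 * n + 1)) Unit)
            ∈ A.erase (Sum.inl j) ∪ insert (Sum.inl j) W :=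
          Finset.mem_union_right _ (Finset.mem_insert_self _ _)
        have hpj'' : p'' j = false := by
          simp [hp'', hjBW, hjB]
        have hagree : ∀ i, i ≠ j → p'' i = p i := by
          intro i hij
          have hii : (Sum.inl i : Sum (Fin (2 * n + 1)) Unit) ≠ Sum.inl j := by
            simp [hij]
          have hmm : (Sum.inl i ∈ A.erase (Sum.inl j) ∪ insert (Sum.inl j) W)
              ↔ (Sum.inl i ∈ A ∪ W) := by rw [hsets2]
          by_cases hm : Sum.inl i ∈ A ∪ W
          · have hm2 := hmm.mpr hm
            have hBA : (Sum.inl i ∈ A.erase (Sum.inl j)) ↔ (Sum.inl i ∈ A) := by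
              rw [Finset.mem_erase]
              simp [hii]
            have hupd : Function.update w (Sum.inl j) false (Sum.inl i) = w (Sum.inl i) :=
              Function.update_of_ne hii _ _
            show (if Sum.inl i ∈ A.erase (Sum.inl j) ∪ insert (Sum.inl j) W then
                (if Sum.inl i ∈ A.erase (Sum.inl j) then x' (Sum.inl i)
                  else Function.update w (Sum.inl j) false (Sum.inl i))
              else c i)
              = (if Sum.inl i ∈ A ∪ W then
                  (if Sum.inl i ∈ A then x' (Sum.inl i) else w (Sum.inl i)) else c i)
            rw [if_pos hm2, if_pos hm]
            by_cases hA' : Sum.inl i ∈ A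
            · rw [if_pos (hBA.mpr hA'), if_pos hA']
            · have hB' : Sum.inl i ∉ A.erase (Sum.inl j) := fun h => hA' (hBA.mp h)
              rw [if_neg hB', if_neg hA', hupd]
          · have hm2 : Sum.inl i ∉ A.erase (Sum.inl j) ∪ insert (Sum.inl j) W :=
              fun h => hm (hmm.mp h)
            show (if Sum.inl i ∈ A.erase (Sum.inl j) ∪ insert (Sum.inl j) W then
                (if Sum.inl i ∈ A.erase (Sum.inl j) then x' (Sum.inl i)
                  else Function.update w (Sum.inl j) false (Sum.inl i))
              else c i)
              = (if Sum.inl i ∈ A ∪ W then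
                  (if Sum.inl i ∈ A then x' (Sum.inl i) else w (Sum.inl i)) else c i)
            rw [if_neg hm2, if_neg hm]
        have hflip : Even (restZeroCount p'') ↔ ¬ Even (restZeroCount p) :=
          restZeroCount_flip hj0 hagree (by rw [hpj'', hpj]; rfl)
        have hp0'' : p'' 0 = true := by rw [hagree 0 (Ne.symm hj0), hp0t]
        rcases hC'' with ⟨h1, _⟩ | ⟨_, h2, _⟩
        · rw [hp0''] at h1; exact absurd h1 (by simp)
        · exact (hflip.mp h2) hEvp
    · -- shrink A at the first pixel
      apply hmin Y (Finset.ssubset_insert h0Y)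
      refine ⟨insert (Sum.inl 0) W, Function.update w (Sum.inl 0) false, ?_, ?_, ?_⟩
      · rw [Finset.disjoint_insert_right]
        exact ⟨h0Y, Finset.disjoint_of_subset_left hYA hdisj⟩
      · intro Z hZ
        rcases Finset.mem_insert.mp hZ with rfl | hZ
        · rw [Function.update_self]; exact hX₁
        · by_cases hZ0 : Z = Sum.inl 0
          · subst hZ0
            rw [Function.update_self]; exact hX₁
          · rw [Function.update_of_ne hZ0]; exact hWact Z hZ
      · have hsets : Y ∪ insert (Sum.inl 0) W = A ∪ W := by
          rw [Finset.union_insert, ← Finset.insert_union, hA]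
        have hinr2 : (Sum.inr () : Sum (Fin (2 * n + 1)) Unit)
            ∉ Y ∪ insert (Sum.inl 0) W := by
          rw [hsets]; exact hinrAW
        obtain ⟨hpix2, hiff2⟩ := pixkey M hpix hout (Y ∪ insert (Sum.inl 0) W)
          (fun Z => if Z ∈ Y then x' Z else Function.update w (Sum.inl 0) false Z) c hinr2
        intro hφ'
        have hC' := hiff2.mp hφ'
        set p' : Fin (2 * n + 1) → Bool := fun i =>
          if Sum.inl i ∈ Y ∪ insert (Sum.inl 0) W then
            (if Sum.inl i ∈ Y then x' (Sum.inl i)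
              else Function.update w (Sum.inl 0) false (Sum.inl i))
          else c i with hp'
        have h0YW : (Sum.inl 0 : Sum (Fin (2 * n + 1)) Unit)
            ∈ Y ∪ insert (Sum.inl 0) W :=
          Finset.mem_union_right _ (Finset.mem_insert_self _ _)
        have hp0' : p' 0 = false := by
          simp [hp', h0YW, h0Y]
        have hagree : ∀ i, i ≠ 0 → p' i = p i := by
          intro i hi0
          have hii : (Sum.inl i : Sum (Fin (2 * n + 1)) Unit) ≠ Sum.inl 0 := by
            simp [hi0]
          have hmm : (Sum.inl i ∈ Y ∪ insert (Sum.inl 0) W) ↔ (Sum.inl i ∈ A ∪ W) := by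
            rw [hsets]
          by_cases hm : Sum.inl i ∈ A ∪ W
          · have hm2 := hmm.mpr hm
            have hupd : Function.update w (Sum.inl 0) false (Sum.inl i) = w (Sum.inl i) :=
              Function.update_of_ne hii _ _
            show (if Sum.inl i ∈ Y ∪ insert (Sum.inl 0) W then
                (if Sum.inl i ∈ Y then x' (Sum.inl i)
                  else Function.update w (Sum.inl 0) false (Sum.inl i))
              else c i)
              = (if Sum.inl i ∈ A ∪ W then
                  (if Sum.inl i ∈ A then x' (Sum.inl i) else w (Sum.inl i)) else c i)
            rw [if_pos hm2, if_pos hm]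
            by_cases hYm : Sum.inl i ∈ Y
            · rw [if_pos hYm, if_pos (hYA hYm)]
            · have hAm : Sum.inl i ∉ A := by
                rw [hA, Finset.mem_insert]
                rintro (h | h)
                · exact hii h
                · exact hYm h
              rw [if_neg hYm, if_neg hAm, hupd]
          · have hm2 : Sum.inl i ∉ Y ∪ insert (Sum.inl 0) W := fun h => hm (hmm.mp h)
            show (if Sum.inl i ∈ Y ∪ insert (Sum.inl 0) W then
                (if Sum.inl i ∈ Y then x' (Sum.inl i)
                  else Function.update w (Sum.inl 0) false (Sum.inl i))
              else c i)
              = (if Sum.inl i ∈ A ∪ W then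
                  (if Sum.inl i ∈ A then x' (Sum.inl i) else w (Sum.inl i)) else c i)
            rw [if_neg hm2, if_neg hm]
        have hcnt : restZeroCount p' = restZeroCount p := restZeroCount_congr' hagree
        apply hnC
        rcases hC' with ⟨_, hEv'⟩ | ⟨h1, _⟩
        · rw [hcnt] at hEv'
          cases hb : x' (Sum.inl 0) with
          | false => exact Or.inl ⟨by rw [hp0, hb], hEv'⟩
          | true => exact absurd ⟨hb, hEv'⟩ hcase
        · rw [hp0'] at h1
          exact absurd h1 (by simp)
  -- Part 2
  have part2 : ¬ IsActualCause M c {Sum.inl 0} (fun _ => false)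
      (fun g => g (Sum.inr ()) = false) := by
    intro h
    apply part1
    refine ⟨∅, fun _ => false, by simp, by simp, ?_⟩
    obtain ⟨h1, h2, h3⟩ := h
    refine ⟨?_, h2, ?_⟩
    · intro X hX
      rcases Finset.mem_insert.mp hX with rfl | hX
      · rw [Function.update_self]; exact hX₁
      · exact absurd hX (Finset.notMem_empty _)
    · rw [show insert (Sum.inl 0) (∅ : Finset (Sum (Fin (2 * n + 1)) Unit))
          = {Sum.inl 0} from rfl]
      exact h3
  refine ⟨part1, part2, ?_⟩
  -- Part 3
  intro i hi
  refine ⟨fun X _ => rfl, hO, fun _ => !(c i), ?_, ?_⟩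
  · -- but-for witness
    obtain ⟨hpix4, hiff4⟩ := pixkey M hpix hout {Sum.inl i} (fun _ => !(c i)) c (by simp)
    intro hφ'
    have hC := hiff4.mp hφ'
    set q : Fin (2 * n + 1) → Bool := fun k =>
      if Sum.inl k ∈ ({Sum.inl i} : Finset (Sum (Fin (2 * n + 1)) Unit))
      then !(c i) else c k with hq
    have hq0 : q 0 = false := by
      have : (Sum.inl 0 : Sum (Fin (2 * n + 1)) Unit) ∉
          ({Sum.inl i} : Finset (Sum (Fin (2 * n + 1)) Unit)) := by
        simp [Ne.symm hi]
      show (if Sum.inl (0 : Fin (2 * n + 1)) ∈ ({Sum.inl i} : Finset (Sum (Fin (2 * n + 1)) Unit))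
          then !(c i) else c 0) = false
      rw [if_neg this]
      exact hc0
    have hagree : ∀ k, k ≠ i → q k = c k := by
      intro k hk
      have : (Sum.inl k : Sum (Fin (2 * n + 1)) Unit) ∉
          ({Sum.inl i} : Finset (Sum (Fin (2 * n + 1)) Unit)) := by simp [hk]
      show (if Sum.inl k ∈ ({Sum.inl i} : Finset (Sum (Fin (2 * n + 1)) Unit))
          then !(c i) else c k) = c k
      rw [if_neg this]
    have hqi : q i = !(c i) := by simp [hq]
    have hflip : Even (restZeroCount q) ↔ ¬ Even (restZeroCount c) :=
      restZeroCount_flip hi hagree hqi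
    rcases hC with ⟨_, h2⟩ | ⟨h1, _⟩
    · exact (hflip.mp h2) hEv
    · rw [hq0] at h1; exact absurd h1 (by simp)
  · -- minimality
    intro B hB
    have hBe : B = ∅ := Finset.eq_empty_of_ssubset_singleton hB
    subst hBe
    rintro ⟨W, w, _, hWact, hneg⟩
    apply hneg
    have hsolact : M.sol (interv ((∅ : Finset (Sum (Fin (2 * n + 1)) Unit)) ∪ W)
        (fun Z => if Z ∈ (∅ : Finset (Sum (Fin (2 * n + 1)) Unit))
          then (fun _ => !(c i)) Z else w Z)) c = M.actVal c := by
      apply M.sol_actual'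
      intro X v hXv
      simp only [interv] at hXv
      by_cases hm : X ∈ (∅ : Finset (Sum (Fin (2 * n + 1)) Unit)) ∪ W
      · rw [if_pos hm] at hXv
        have hXW : X ∈ W := by simpa using hm
        have := Option.some.inj hXv
        simp only [Finset.notMem_empty, if_false] at this
        rw [← this]
        exact hWact X hXW
      · rw [if_neg hm] at hXv
        exact absurd hXv (by simp)
    show _ = false
    rw [hsolact]
    exact hO
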